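/- Let P : C^op → InfSL be a variational doctrine (elementary, with comprehensive diagonals and full weak comprehension). Then the elementary quotient completion Q(P) : Q_P^op → InfSL has full strong comprehension: for α ∈ Q(P)(A,ρ) ⊆ P(A) with weak comprehension arrow {α} : X → A in C, the arrow [{α}] : (X, P({α}×{α})(ρ)) → (A,ρ) is a strong (monic) comprehension arrow of α in Q(P). -/

import Mathlib

open CategoryTheory CategoryTheory.Limits Opposite

noncomputable section

universe w v u

namespace DoctrinePaper

variable {C : Type u} [Category.{v} C] [HasFiniteProducts C]

/-- The fiber of a primary doctrine `P : Cᵒᵖ ⥤ SemilatInfCat` over an object `A`. -/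
abbrev Fib (P : Cᵒᵖ ⥤ SemilatInfCat.{w}) (A : C) : Type w :=
  ↥(P.obj (op A))

/-- Reindexing along an arrow `f : A ⟶ B`. -/
def rmap (P : Cᵒᵖ ⥤ SemilatInfCat.{w}) {A B : C} (f : A ⟶ B) :
    Fib P B → Fib P A :=
  fun x => (P.map f.op) x

variable (P : Cᵒᵖ ⥤ SemilatInfCat.{w})

/-- An elementary doctrine: fibered equalities `δ A ∈ P (A ⨯ A)` such that
`E_e(α) = P⟨pr1,pr2⟩(α) ⊓ P⟨pr2,pr3⟩(δ A)` is left adjoint to reindexing along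
`e = ⟨pr1,pr2,pr2⟩ : X ⨯ A ⟶ (X ⨯ A) ⨯ A`. -/
structure IsElementary where
  δ : ∀ A : C, Fib P (A ⨯ A)
  adj :
    ∀ (X A : C) (α : Fib P (X ⨯ A)) (β : Fib P ((X ⨯ A) ⨯ A)),
      (rmap P (prod.fst : (X ⨯ A) ⨯ A ⟶ X ⨯ A) α ⊓
          rmap P (prod.lift (prod.fst ≫ prod.snd) prod.snd : (X ⨯ A) ⨯ A ⟶ A ⨯ A) (δ A) ≤ β)
        ↔ α ≤ rmap P (prod.lift (𝟙 (X ⨯ A)) prod.snd : X ⨯ A ⟶ (X ⨯ A) ⨯ A) β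

/-- A `P`-equivalence relation over `A`. -/
structure IsEqRel (hE : IsElementary P) {A : C} (ρ : Fib P (A ⨯ A)) : Prop where
  refl : hE.δ A ≤ ρ
  symm : ρ = rmap P (prod.lift prod.snd prod.fst : A ⨯ A ⟶ A ⨯ A) ρ
  trans :
    rmap P (prod.fst : (A ⨯ A) ⨯ A ⟶ A ⨯ A) ρ ⊓
        rmap P (prod.lift (prod.fst ≫ prod.snd) prod.snd : (A ⨯ A) ⨯ A ⟶ A ⨯ A) ρ ≤
      rmap P (prod.lift (prod.fst ≫ prod.fst) prod.snd : (A ⨯ A) ⨯ A ⟶ A ⨯ A) ρ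

/-- An elementary existential doctrine, together with the induced left adjoints
`∃_f` along all arrows, satisfying the adjunction law, Frobenius reciprocity, and
the Beck–Chevalley condition along pullbacks of projections. -/
structure IsExistential extends IsElementary P where
  E : ∀ {A B : C}, (A ⟶ B) → Fib P A → Fib P B
  adjE : ∀ {A B : C} (f : A ⟶ B) (α : Fib P A) (β : Fib P B),
    E f α ≤ β ↔ α ≤ rmap P f β
  frobenius : ∀ {A B : C} (f : A ⟶ B) (α : Fib P A) (β : Fib P B),
    E f (α ⊓ rmap P f β) = E f α ⊓ β
  beckChevalley : ∀ {B A A' : C} (f : A' ⟶ A) (β : Fib P (B ⨯ A)),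
    E (prod.snd : B ⨯ A' ⟶ A') (rmap P (prod.map (𝟙 B) f) β) =
      rmap P f (E (prod.snd : B ⨯ A ⟶ A) β)

/-- Descent data for a relation `ρ` over `A`. -/
def Des {A : C} (ρ : Fib P (A ⨯ A)) : Set (Fib P A) :=
  {α | rmap P (prod.fst : A ⨯ A ⟶ A) α ⊓ ρ ≤ rmap P (prod.snd : A ⨯ A ⟶ A) α}

/-- Comprehensive diagonals: `f = g` iff `⊤ = P⟨f,g⟩(δ)`. -/
def ComprehensiveDiagonals (hE : IsElementary P) : Prop :=
  ∀ {X A : C} (f g : X ⟶ A), f = g ↔ rmap P (prod.lift f g) (hE.δ A) = ⊤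

/-- (Weak) comprehension structure. -/
structure Comprehension where
  cObj : ∀ {A : C}, Fib P A → C
  cArr : ∀ {A : C} (α : Fib P A), cObj α ⟶ A
  cTop : ∀ {A : C} (α : Fib P A), rmap P (cArr α) α = ⊤
  cUniv : ∀ {A : C} (α : Fib P A) {Y : C} (f : Y ⟶ A),
    rmap P f α = ⊤ → ∃ k : Y ⟶ cObj α, k ≫ cArr α = f

/-- Full comprehension. -/
def Comprehension.Full (hC : Comprehension P) : Prop :=
  ∀ {A : C} (α β : Fib P A), α ≤ β ↔ rmap P (hC.cArr α) β = ⊤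

/-- Strong comprehension: comprehension arrows are monic. -/
def Comprehension.Strong (hC : Comprehension P) : Prop :=
  ∀ {A : C} (α : Fib P A), Mono (hC.cArr α)

/-- `P`-injective arrow. -/
def PInj (hE : IsElementary P) {X A : C} (f : X ⟶ A) : Prop :=
  rmap P (prod.map f f) (hE.δ A) = hE.δ X

/-- `P`-surjective arrow. -/
def PSurj (hEx : IsExistential P) {X A : C} (f : X ⟶ A) : Prop :=
  hEx.E f (⊤ : Fib P X) = ⊤

/-- The product relation `ρ ⊠ σ` on `(A ⨯ B) ⨯ (A ⨯ B)`. -/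
def boxprod {A B : C} (ρ : Fib P (A ⨯ A)) (σ : Fib P (B ⨯ B)) :
    Fib P ((A ⨯ B) ⨯ (A ⨯ B)) :=
  rmap P (prod.map prod.fst prod.fst) ρ ⊓ rmap P (prod.map prod.snd prod.snd) σ

/-- The hom condition of the elementary quotient completion: `f : A ⟶ B`
represents an arrow `(A,ρ) ⟶ (B,σ)` iff `ρ ≤ P(f×f)(σ)`. -/
def QHomC {A B : C} (ρ : Fib P (A ⨯ A)) (σ : Fib P (B ⨯ B)) (f : A ⟶ B) : Prop :=
  ρ ≤ rmap P (prod.map f f) σ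

/-- The equivalence on representatives: `f ∼ g` iff `⊤ = P⟨f,g⟩(σ)`. -/
def QEq {A B : C} (σ : Fib P (B ⨯ B)) (f g : A ⟶ B) : Prop :=
  rmap P (prod.lift f g) σ = ⊤


set_option linter.unusedSectionVars false

omit [HasFiniteProducts C] in
lemma rmap_comp' {A B D : C} (f : A ⟶ B) (g : B ⟶ D) (x : Fib P D) :
    rmap P (f ≫ g) x = rmap P f (rmap P g x) := by
  simp [rmap, op_comp, P.map_comp]

omit [HasFiniteProducts C] in
lemma rmap_id' {A : C} (x : Fib P A) : rmap P (𝟙 A) x = x := by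
  simp [rmap, P.map_id]

omit [HasFiniteProducts C] in
lemma rmap_top' {A B : C} (f : A ⟶ B) : rmap P f (⊤ : Fib P B) = ⊤ :=
  (P.map f.op).map_top'

omit [HasFiniteProducts C] in
lemma rmap_inf' {A B : C} (f : A ⟶ B) (x y : Fib P B) :
    rmap P f (x ⊓ y) = rmap P f x ⊓ rmap P f y :=
  (P.map f.op).map_inf' x y

omit [HasFiniteProducts C] in
lemma rmap_mono' {A B : C} (f : A ⟶ B) {x y : Fib P B} (h : x ≤ y) :
    rmap P f x ≤ rmap P f y := by
  have : x ⊓ y = x := inf_eq_left.mpr h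
  rw [← this, rmap_inf']; exact inf_le_right

/-- Substitution rule derived from the elementary adjunction. -/
lemma subst' {X A : C} (hE : IsElementary P) (θ : Fib P (X ⨯ A)) :
    rmap P (prod.fst : (X ⨯ A) ⨯ A ⟶ X ⨯ A) θ ⊓
      rmap P (prod.lift (prod.fst ≫ prod.snd) prod.snd : (X ⨯ A) ⨯ A ⟶ A ⨯ A) (hE.δ A) ≤
    rmap P (prod.lift (prod.fst ≫ prod.fst) prod.snd : (X ⨯ A) ⨯ A ⟶ X ⨯ A) θ := by
  refine (hE.adj X A θ _).mpr ?_
  rw [← rmap_comp']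
  have h : (prod.lift (𝟙 (X ⨯ A)) prod.snd ≫
      prod.lift (prod.fst ≫ prod.fst) prod.snd : X ⨯ A ⟶ X ⨯ A) = 𝟙 _ := by
    apply Limits.prod.hom_ext <;> simp only [Category.assoc, prod.lift_fst, prod.lift_snd, Category.id_comp, prod.lift_fst_assoc, prod.lift_snd_assoc]
  rw [h, rmap_id']

/-- Reflexivity of a reindexed equality predicate. -/
lemma delta_le' {X A : C} (hE : IsElementary P) (hcd : ComprehensiveDiagonals P hE)
    (c : X ⟶ A) : hE.δ X ≤ rmap P (prod.map c c) (hE.δ A) := by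
  have hsub := subst' P hE (X := X) (A := X) (rmap P (prod.map c c) (hE.δ A))
  have h := rmap_mono' P
    (prod.lift (prod.lift prod.fst prod.fst) prod.snd : X ⨯ X ⟶ (X ⨯ X) ⨯ X) hsub
  rw [rmap_inf'] at h
  have e1 : (prod.lift (prod.lift prod.fst prod.fst) prod.snd : X ⨯ X ⟶ (X ⨯ X) ⨯ X) ≫
      prod.fst = prod.lift prod.fst prod.fst := by exact prod.lift_fst _ _
  have e2 : (prod.lift (prod.lift prod.fst prod.fst) prod.snd : X ⨯ X ⟶ (X ⨯ X) ⨯ X) ≫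
      prod.lift (prod.fst ≫ prod.snd) prod.snd = 𝟙 (X ⨯ X) := by
    apply Limits.prod.hom_ext <;> simp only [Category.assoc, prod.lift_fst, prod.lift_snd, Category.id_comp, prod.lift_fst_assoc, prod.lift_snd_assoc]
  have e3 : (prod.lift (prod.lift prod.fst prod.fst) prod.snd : X ⨯ X ⟶ (X ⨯ X) ⨯ X) ≫
      prod.lift (prod.fst ≫ prod.fst) prod.snd = 𝟙 (X ⨯ X) := by
    apply Limits.prod.hom_ext <;> simp only [Category.assoc, prod.lift_fst, prod.lift_snd, Category.id_comp, prod.lift_fst_assoc, prod.lift_snd_assoc]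
  have e4 : (prod.lift prod.fst prod.fst : X ⨯ X ⟶ X ⨯ X) ≫ prod.map c c =
      prod.lift (prod.fst ≫ c) (prod.fst ≫ c) := by simp
  have t1 : rmap P (prod.lift (prod.lift prod.fst prod.fst) prod.snd : X ⨯ X ⟶ (X ⨯ X) ⨯ X)
      (rmap P (prod.fst : (X ⨯ X) ⨯ X ⟶ X ⨯ X) (rmap P (prod.map c c) (hE.δ A))) = ⊤ := by
    rw [← rmap_comp' P _ (prod.fst : (X ⨯ X) ⨯ X ⟶ X ⨯ X), e1,
      ← rmap_comp' P _ (prod.map c c), e4]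
    exact (hcd (prod.fst ≫ c) (prod.fst ≫ c)).mp rfl
  have t2 : rmap P (prod.lift (prod.lift prod.fst prod.fst) prod.snd : X ⨯ X ⟶ (X ⨯ X) ⨯ X)
      (rmap P (prod.lift (prod.fst ≫ prod.snd) prod.snd : (X ⨯ X) ⨯ X ⟶ X ⨯ X) (hE.δ X)) =
      hE.δ X := by
    rw [← rmap_comp' P _ (prod.lift (prod.fst ≫ prod.snd) prod.snd), e2, rmap_id']
  have t3 : rmap P (prod.lift (prod.lift prod.fst prod.fst) prod.snd : X ⨯ X ⟶ (X ⨯ X) ⨯ X)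
      (rmap P (prod.lift (prod.fst ≫ prod.fst) prod.snd : (X ⨯ X) ⨯ X ⟶ X ⨯ X)
        (rmap P (prod.map c c) (hE.δ A))) = rmap P (prod.map c c) (hE.δ A) := by
    rw [← rmap_comp' P _ (prod.lift (prod.fst ≫ prod.fst) prod.snd), e3, rmap_id']
  rw [t1, t2, t3] at h
  simpa using h

/-- If `P` is variational (elementary, comprehensive diagonals,
full weak comprehension), then the elementary quotient completion `Q(P)` has full
strong comprehension: for `α ∈ Des ρ` with weak comprehension arrow `{α} : X ⟶ A`
in `C`, the arrow `[{α}] : (X, P({α}×{α})(ρ)) ⟶ (A,ρ)` is a full strong (monic)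
comprehension arrow of `α` in `Q(P)`. -/
theorem quotient_completion_full_strong_comprehension
    (hE : IsElementary P) (hC : Comprehension P)
    (hfull : hC.Full P) (hcd : ComprehensiveDiagonals P hE)
    {A : C} (ρ : Fib P (A ⨯ A)) (hρ : IsEqRel P hE ρ)
    (α : Fib P A) (hα : α ∈ Des P ρ) :
    IsEqRel P hE (rmap P (prod.map (hC.cArr α) (hC.cArr α)) ρ) ∧
    QHomC P (rmap P (prod.map (hC.cArr α) (hC.cArr α)) ρ) ρ (hC.cArr α) ∧
    rmap P (hC.cArr α) α = ⊤ ∧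
    (∀ {Y : C} (τ : Fib P (Y ⨯ Y)), IsEqRel P hE τ →
      ∀ f : Y ⟶ A, QHomC P τ ρ f → rmap P f α = ⊤ →
        ∃ k : Y ⟶ hC.cObj α,
          QHomC P τ (rmap P (prod.map (hC.cArr α) (hC.cArr α)) ρ) k ∧
          QEq P ρ (k ≫ hC.cArr α) f) ∧
    (∀ {Z : C} (ζ : Fib P (Z ⨯ Z)), IsEqRel P hE ζ →
      ∀ u v : Z ⟶ hC.cObj α,
        QHomC P ζ (rmap P (prod.map (hC.cArr α) (hC.cArr α)) ρ) u →
        QHomC P ζ (rmap P (prod.map (hC.cArr α) (hC.cArr α)) ρ) v →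
        QEq P ρ (u ≫ hC.cArr α) (v ≫ hC.cArr α) →
        QEq P (rmap P (prod.map (hC.cArr α) (hC.cArr α)) ρ) u v) ∧
    (∀ β : Fib P A, β ∈ Des P ρ → (α ≤ β ↔ rmap P (hC.cArr α) β = ⊤)) := by
  classical
  set c := hC.cArr α with hc
  have hQTop : ∀ {Y : C} (f : Y ⟶ A), rmap P (prod.lift f f) ρ = ⊤ := by
    intro Y f
    have h := rmap_mono' P (prod.lift f f) hρ.refl
    rw [(hcd f f).mp rfl] at h
    exact top_le_iff.mp h
  refine ⟨?_, le_refl _, hC.cTop α, ?_, ?_, fun β _ => hfull α β⟩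
  · constructor
    · exact le_trans (delta_le' P hE hcd c) (rmap_mono' P _ hρ.refl)
    · have hcomm : (prod.lift prod.snd prod.fst : hC.cObj α ⨯ hC.cObj α ⟶ _) ≫
          prod.map c c = prod.map c c ≫ prod.lift prod.snd prod.fst := by
        apply Limits.prod.hom_ext <;> simp
      conv_rhs => rw [← rmap_comp', hcomm, rmap_comp', ← hρ.symm]
    · have h := rmap_mono' P (prod.map (prod.map c c) c) hρ.trans
      rw [rmap_inf', ← rmap_comp', ← rmap_comp', ← rmap_comp'] at h
      have e1 : prod.map (prod.map c c) c ≫ (prod.fst : (A ⨯ A) ⨯ A ⟶ A ⨯ A) =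
          prod.fst ≫ prod.map c c := by simp
      have e2 : prod.map (prod.map c c) c ≫
          (prod.lift (prod.fst ≫ prod.snd) prod.snd : (A ⨯ A) ⨯ A ⟶ A ⨯ A) =
          prod.lift (prod.fst ≫ prod.snd) prod.snd ≫ prod.map c c := by
        apply Limits.prod.hom_ext <;> simp
      have e3 : prod.map (prod.map c c) c ≫
          (prod.lift (prod.fst ≫ prod.fst) prod.snd : (A ⨯ A) ⨯ A ⟶ A ⨯ A) =
          prod.lift (prod.fst ≫ prod.fst) prod.snd ≫ prod.map c c := by
        apply Limits.prod.hom_ext <;> simp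
      rw [e1, e2, e3, rmap_comp', rmap_comp', rmap_comp'] at h
      exact h
  · intro Y τ hτ f hf hfα
    obtain ⟨k, hk⟩ := hC.cUniv α f hfα
    refine ⟨k, ?_, ?_⟩
    · show τ ≤ rmap P (prod.map k k) (rmap P (prod.map c c) ρ)
      rw [← rmap_comp', prod.map_map, hk]
      exact hf
    · show rmap P (prod.lift (k ≫ c) f) ρ = ⊤
      rw [hk]
      exact hQTop f
  · intro Z ζ hζ u v hu hv huv
    show rmap P (prod.lift u v) (rmap P (prod.map c c) ρ) = ⊤
    rw [← rmap_comp']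
    have e : prod.lift u v ≫ prod.map c c = prod.lift (u ≫ c) (v ≫ c) := by simp
    rw [e]
    exact huv


end DoctrinePaper
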